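/- arXiv:2105.01788 — 2 statements merged into one kernel-verified Lean document; each statement's English description precedes it below -/
import Mathlib

section
/- Let l ≥ 1 and let J : ℝ^{l+1} → ℝ (with coordinates indexed 0, …, l) satisfy the translation invariance J(t + c·𝟙) = J(t) for every t ∈ ℝ^{l+1} and c ∈ ℝ, where 𝟙 is the all-ones vector. Define the linear map R : ℝ^l → ℝ^{l+1} by (Rd)₀ = 0 and (Rd)ᵢ = 2(d₁ + ⋯ + dᵢ) for i = 1, …, l. Let D = {d ∈ ℝ^l : dᵢ > 0 for all i} and T = {t ∈ ℝ^{l+1} : tᵢ₋₁ < tᵢ for i = 1, …, l}. Then a point d* ∈ D is a local minimiser of the restriction of J∘R to D if and only if t* = Rd* is a local minimiser of the restriction of J to T. -/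
open Filter Set Topology

private lemma vtr_filter_succ (l k : ℕ) (hkl : k < l) :
    Finset.univ.filter (fun j : Fin l => (j : ℕ) < k + 1)
      = insert ⟨k, hkl⟩ (Finset.univ.filter fun j : Fin l => (j : ℕ) < k) := by
  ext j
  simp [Nat.lt_succ_iff_lt_or_eq, Fin.ext_iff, or_comm]
  omega

private lemma vtr_tele (l : ℕ) (t : Fin (l + 1) → ℝ) (k : ℕ) (hk : k ≤ l) :
    ∑ j ∈ Finset.univ.filter (fun j : Fin l => (j : ℕ) < k),
        (t j.succ - t j.castSucc)
      = t ⟨k, Nat.lt_succ_of_le hk⟩ - t 0 := by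
  induction k with
  | zero =>
      simp
  | succ k ih =>
      have hkl : k < l := hk
      rw [vtr_filter_succ l k hkl, Finset.sum_insert (by simp),
        ih (le_of_lt hkl)]
      have h1 : (⟨k, hkl⟩ : Fin l).succ = ⟨k + 1, Nat.lt_succ_of_le hk⟩ := rfl
      have h2 : (⟨k, hkl⟩ : Fin l).castSucc = ⟨k, Nat.lt_succ_of_le (le_of_lt hkl)⟩ := rfl
      rw [h1, h2]
      have : t ⟨k, Nat.lt_succ_of_le (le_of_lt hkl)⟩ = t ⟨k, Nat.lt_succ_of_le hkl.le⟩ := rfl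
      rw [this]
      ring

/-- Proposition 3: for a translation-invariant cost `J`, `d*` is a local
minimiser of `J ∘ R` on the positive orthant iff `t* = R d*` is a local
minimiser of `J` on the set of strictly increasing time vectors. -/
theorem variable_time_reparametrisation
    (l : ℕ) (hl : 1 ≤ l)
    (J : (Fin (l + 1) → ℝ) → ℝ)
    (hJ : ∀ (t : Fin (l + 1) → ℝ) (c : ℝ), J (t + fun _ => c) = J t)
    (R : (Fin l → ℝ) → (Fin (l + 1) → ℝ))
    (hR : ∀ (d : Fin l → ℝ) (i : Fin (l + 1)),
      R d i = 2 * ∑ j ∈ Finset.univ.filter (fun j : Fin l => (j : ℕ) < (i : ℕ)), d j)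
    (d : Fin l → ℝ) (hd : ∀ i, 0 < d i) :
    IsLocalMinOn (J ∘ R) {d' : Fin l → ℝ | ∀ i, 0 < d' i} d ↔
      IsLocalMinOn J
        {t : Fin (l + 1) → ℝ | ∀ i : Fin l, t i.castSucc < t i.succ} (R d) := by
  set D : Set (Fin l → ℝ) := {d' | ∀ i, 0 < d' i} with hD
  set T : Set (Fin (l + 1) → ℝ) := {t | ∀ i : Fin l, t i.castSucc < t i.succ} with hT
  set S : (Fin (l + 1) → ℝ) → Fin l → ℝ :=
    fun t i => (t i.succ - t i.castSucc) / 2 with hS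
  -- difference formula for R
  have hdiff : ∀ (d' : Fin l → ℝ) (i : Fin l),
      R d' i.succ - R d' i.castSucc = 2 * d' i := by
    intro d' i
    rw [hR, hR]
    have h1 : ((i.succ : Fin (l + 1)) : ℕ) = (i : ℕ) + 1 := rfl
    have h2 : ((i.castSucc : Fin (l + 1)) : ℕ) = (i : ℕ) := rfl
    rw [h1, h2, vtr_filter_succ l i i.isLt, Finset.sum_insert (by simp)]
    have : (⟨(i : ℕ), i.isLt⟩ : Fin l) = i := rfl
    rw [this]; ring
  -- S ∘ R = id
  have hSR : ∀ d' : Fin l → ℝ, S (R d') = d' := by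
    intro d'; funext i
    have := hdiff d' i
    simp only [hS]
    linarith
  -- R ∘ S = subtract t 0
  have hRS : ∀ t : Fin (l + 1) → ℝ, R (S t) = t + fun _ => -(t 0) := by
    intro t; funext i
    rw [hR]
    have : ∑ j ∈ Finset.univ.filter (fun j : Fin l => (j : ℕ) < (i : ℕ)), S t j
        = (∑ j ∈ Finset.univ.filter (fun j : Fin l => (j : ℕ) < (i : ℕ)),
            (t j.succ - t j.castSucc)) / 2 := by
      rw [Finset.sum_div]
    rw [this, vtr_tele l t (i : ℕ) (Nat.lt_succ_iff.mp i.isLt)]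
    have : (⟨(i : ℕ), Nat.lt_succ_of_le (Nat.lt_succ_iff.mp i.isLt)⟩ : Fin (l + 1)) = i := by
      apply Fin.ext; rfl
    rw [this]
    simp
    ring
  -- J ∘ R ∘ S = J
  have hJRS : ∀ t : Fin (l + 1) → ℝ, J (R (S t)) = J t := by
    intro t; rw [hRS t, hJ]
  -- continuity
  have hRc : Continuous R := by
    have : R = fun d' (i : Fin (l + 1)) =>
        2 * ∑ j ∈ Finset.univ.filter (fun j : Fin l => (j : ℕ) < (i : ℕ)), d' j := by
      funext d' i; exact hR d' i
    rw [this]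
    exact continuous_pi fun i =>
      continuous_const.mul (continuous_finset_sum _ fun j _ => continuous_apply j)
  have hSc : Continuous S := by
    rw [hS]
    exact continuous_pi fun i =>
      (((continuous_apply i.succ).sub (continuous_apply i.castSucc)).div_const 2)
  -- maps-to facts
  have hmapR : MapsTo R D T := by
    intro d' hd' i
    have := hdiff d' i
    have := hd' i
    linarith [hdiff d' i, hd' i]
  have hmapS : MapsTo S T D := by
    intro t ht i
    have := ht i
    show 0 < (t i.succ - t i.castSucc) / 2
    linarith
  constructor
  · intro h
    have htend : Tendsto S (𝓝[T] (R d)) (𝓝[D] d) := by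
      have := (hSc.continuousWithinAt (s := T) (x := R d)).tendsto_nhdsWithin hmapS
      rwa [hSR d] at this
    have hev : ∀ᶠ t in 𝓝[T] (R d), (J ∘ R) d ≤ (J ∘ R) (S t) := htend.eventually h
    refine hev.mono fun t ht => ?_
    simpa [Function.comp, hJRS t] using ht
  · intro h
    have htend : Tendsto R (𝓝[D] d) (𝓝[T] (R d)) :=
      (hRc.continuousWithinAt (s := D) (x := d)).tendsto_nhdsWithin hmapR
    exact htend.eventually h
end

section
/- Let l ≥ 1 and let s₀, s₁, …, s_l be positive natural numbers. For i = 1, …, l let Aᵢ ∈ ℝ^{sᵢ₋₁×sᵢ₋₁}, Bᵢ ∈ ℝ^{sᵢ₋₁×sᵢ}, Cᵢ ∈ ℝ^{sᵢ×sᵢ}, cᵢ⁻ ∈ ℝ^{sᵢ₋₁} and cᵢ⁺ ∈ ℝ^{sᵢ}. Define recursively Ā₁ = A₁, Āᵢ = Aᵢ + Cᵢ₋₁ − Bᵢ₋₁ᵀ Āᵢ₋₁⁻¹ Bᵢ₋₁ for i = 2, …, l, and c̄₁ = c₁⁻, c̄ᵢ = cᵢ⁻ + cᵢ₋₁⁺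 − Bᵢ₋₁ᵀ Āᵢ₋₁⁻¹ c̄ᵢ₋₁ for i = 2, …, l. Assume each Āᵢ is invertible and that C_l − B_lᵀ Ā_l⁻¹ B_l is invertible. Define h_l = (C_l − B_lᵀ Ā_l⁻¹ B_l)⁻¹ (c_l⁺ − B_lᵀ Ā_l⁻¹ c̄_l) and, backwards for i = l, l−1, …, 1, hᵢ₋₁ = Āᵢ⁻¹ (c̄ᵢ − Bᵢ hᵢ). Then the vectors h₀ ∈ ℝ^{s₀}, …, h_l ∈ ℝ^{s_l} satisfy the block-tridiagonal linear system: A₁ h₀ + B₁ h₁ = c₁⁻; Bᵢᵀ hᵢ₋₁ + (Cᵢ + Aᵢ₊₁) hᵢ + Bᵢ₊₁ hᵢ₊₁ = cᵢ⁺ + cᵢ₊₁⁻ for i = 1, …, l−1; and B_lᵀ h_{l−1} + C_l h_l = c_l⁺. -/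
open Matrix

/-- Lemma 1 of the paper: the forward recursions over `Āᵢ`, `c̄ᵢ` followed by the
backward recursion for the free derivative values `hᵢ` solve the block-tridiagonal
linear system arising from the KKT conditions of the fixed-time spline QP.
Here the number of blocks is `l = m + 1 ≥ 1`, the paper's `Aᵢ, Bᵢ, Cᵢ, cᵢ⁻, cᵢ⁺`
(for `i = 1, …, l`) are `A (i-1), B (i-1), C (i-1), cm (i-1), cp (i-1)`, and the
paper's `hᵢ` (for `i = 0, …, l`) is `h i`. -/
theorem block_tridiagonal_recursions_solve_system
    (m : ℕ) (s : ℕ → ℕ) (hs : ∀ i, i ≤ m + 1 → 0 < s i)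
    (A : (i : ℕ) → Matrix (Fin (s i)) (Fin (s i)) ℝ)
    (B : (i : ℕ) → Matrix (Fin (s i)) (Fin (s (i + 1))) ℝ)
    (C : (i : ℕ) → Matrix (Fin (s (i + 1))) (Fin (s (i + 1))) ℝ)
    (cm : (i : ℕ) → Fin (s i) → ℝ)
    (cp : (i : ℕ) → Fin (s (i + 1)) → ℝ)
    (Abar : (i : ℕ) → Matrix (Fin (s i)) (Fin (s i)) ℝ)
    (cbar : (i : ℕ) → Fin (s i) → ℝ)
    (h : (i : ℕ) → Fin (s i) → ℝ)
    (hAbar0 : Abar 0 = A 0)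
    (hAbar : ∀ i < m,
      Abar (i + 1) = A (i + 1) + C i - (B i)ᵀ * (Abar i)⁻¹ * B i)
    (hcbar0 : cbar 0 = cm 0)
    (hcbar : ∀ i < m,
      cbar (i + 1) = cm (i + 1) + cp i - (B i)ᵀ.mulVec ((Abar i)⁻¹.mulVec (cbar i)))
    (hAinv : ∀ i ≤ m, IsUnit (Abar i))
    (hlast_inv : IsUnit (C m - (B m)ᵀ * (Abar m)⁻¹ * B m))
    (hlast : h (m + 1) =
      (C m - (B m)ᵀ * (Abar m)⁻¹ * B m)⁻¹.mulVec
        (cp m - (B m)ᵀ.mulVec ((Abar m)⁻¹.mulVec (cbar m))))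
    (hback : ∀ i ≤ m,
      h i = (Abar i)⁻¹.mulVec (cbar i - (B i).mulVec (h (i + 1)))) :
    (A 0).mulVec (h 0) + (B 0).mulVec (h 1) = cm 0 ∧
    (∀ i < m,
      (B i)ᵀ.mulVec (h i) + (C i + A (i + 1)).mulVec (h (i + 1)) +
          (B (i + 1)).mulVec (h (i + 2)) =
        cp i + cm (i + 1)) ∧
    (B m)ᵀ.mulVec (h m) + (C m).mulVec (h (m + 1)) = cp m := by

  have cancel : ∀ {n : ℕ} (M : Matrix (Fin n) (Fin n) ℝ), IsUnit M →
      ∀ v : Fin n → ℝ, M.mulVec (M⁻¹.mulVec v) = v := by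
    intro n M hM v
    rw [Matrix.mulVec_mulVec, Matrix.mul_nonsing_inv _
      ((Matrix.isUnit_iff_isUnit_det M).mp hM), Matrix.one_mulVec]
  have key : ∀ i ≤ m, (Abar i).mulVec (h i) + (B i).mulVec (h (i + 1)) = cbar i := by
    intro i hi
    rw [hback i hi, cancel _ (hAinv i hi)]
    abel
  have hBh : ∀ i ≤ m, (B i)ᵀ.mulVec (h i)
      = (B i)ᵀ.mulVec ((Abar i)⁻¹.mulVec (cbar i))
        - ((B i)ᵀ * (Abar i)⁻¹ * (B i)).mulVec (h (i + 1)) := by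
    intro i hi
    rw [hback i hi]
    simp [Matrix.mulVec_sub, Matrix.mulVec_mulVec, Matrix.mul_assoc]
  refine ⟨?_, ?_, ?_⟩
  · have := key 0 (Nat.zero_le m)
    rwa [hAbar0, hcbar0] at this
  · intro i hi
    have k := key (i + 1) hi
    rw [hAbar i hi, hcbar i hi] at k
    have b := hBh i (le_of_lt hi)
    rw [Matrix.sub_mulVec, Matrix.add_mulVec] at k
    have goal : (B i)ᵀ.mulVec (h i) + (C i + A (i + 1)).mulVec (h (i + 1)) +
        (B (i + 1)).mulVec (h (i + 2)) = cp i + cm (i + 1) := by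
      rw [b, Matrix.add_mulVec]
      ext j
      have t := congrFun k j
      simp only [Pi.add_apply, Pi.sub_apply] at t ⊢
      linarith
    exact goal
  · have k := key m le_rfl
    have b := hBh m le_rfl
    have hm : (C m - (B m)ᵀ * (Abar m)⁻¹ * B m).mulVec (h (m + 1))
        = cp m - (B m)ᵀ.mulVec ((Abar m)⁻¹.mulVec (cbar m)) := by
      rw [hlast, cancel _ hlast_inv]
    rw [Matrix.sub_mulVec] at hm
    rw [b]
    ext j
    have t := congrFun hm j
    simp only [Pi.add_apply, Pi.sub_apply] at t ⊢
    linarith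
end
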